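/- Let V be a set of voters and A a set of alternatives. Let φ be a social choice function defined on the set of all strict profiles over V whose range A* ⊆ A is finite of cardinality at least three. For x ∈ A* and a strict profile P, let D(x,P) = {v ∈ V : x is v's top choice among the alternatives in A* according to P_v}. Then φ is coalitionally strategy-proof if and only if there exists an ultrafilter F on V such that for every strict profile P, φ(P) is the unique alternative a ∈ A* with D(a,P) ∈ F. -/

import Mathlib

universe u v

variable {V : Type u} {A : Type v}

/-- A strict (linear) ordering on `A`: complete, transitive and antisymmetric. -/
abbrev StrictOrd (A : Type v) := {W : A → A → Prop // Total W ∧ Transitive W ∧ AntiSymmetric W}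

/-- A strict profile assigns to every voter a strict ordering on the alternatives. -/
abbrev SProfile (V : Type u) (A : Type v) := V → StrictOrd A

/-- Strict preference `x ≻_W y`. -/
def SPref (W : StrictOrd A) (x y : A) : Prop := W.1 x y ∧ ¬ W.1 y x

/-- `D(a,P)` (relative to the pair `{a,b}`): voters strictly preferring `a` to `b`. -/
def Dset (a b : A) (P : SProfile V A) : Set V := {v | SPref (P v) a b}

/-- The coalition `D` can manipulate the strict profile `P` under `φ`. -/
def Manipulates (φ : SProfile V A → A) (D : Set V) (P : SProfile V A) : Prop :=
  D.Nonempty ∧ ∃ Q : SProfile V A, (∀ v ∉ D, Q v = P v) ∧ ∀ v ∈ D, SPref (P v) (φ Q) (φ P)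

/-- Coalitional strategy-proofness (over strict profiles). -/
def CSP (φ : SProfile V A → A) : Prop :=
  ∀ (D : Set V) (P : SProfile V A), ¬ Manipulates φ D P

/-- `D(c,P)` for `c ∈ A*`: voters whose top choice among the alternatives in `Astar`
is `c` (i.e. they strictly prefer `c` to every other alternative of `Astar`). -/
def DTop (Astar : Set A) (c : A) (P : SProfile V A) : Set V :=
  {v | ∀ y ∈ Astar, y ≠ c → SPref (P v) c y}

open Classical

section Infra

noncomputable def linA (A : Type v) : LinearOrder A := IsWellOrder.linearOrder WellOrderingRel

/-- Linear order built from a priority function, ties broken by a fixed background order. -/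
noncomputable def mkOrd (f : A → ℕ) : StrictOrd A := by
  refine ⟨fun x y => f x < f y ∨ (f x = f y ∧ (linA A).le x y), ?_, ?_, ?_⟩
  · intro x y
    rcases lt_trichotomy (f x) (f y) with h | h | h
    · exact Or.inl (Or.inl h)
    · rcases (linA A).le_total x y with h' | h'
      · exact Or.inl (Or.inr ⟨h, h'⟩)
      · exact Or.inr (Or.inr ⟨h.symm, h'⟩)
    · exact Or.inr (Or.inl h)
  · rintro a b c (h1 | ⟨h1, h1'⟩) (h2 | ⟨h2, h2'⟩)
    · exact Or.inl (h1.trans h2)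
    · exact Or.inl (by omega)
    · exact Or.inl (by omega)
    · exact Or.inr ⟨h1.trans h2, (linA A).le_trans _ _ _ h1' h2'⟩
  · rintro a b (h1 | ⟨h1, h1'⟩) (h2 | ⟨h2, h2'⟩)
    · omega
    · omega
    · omega
    · exact (linA A).le_antisymm _ _ h1' h2'

lemma mkOrd_spref {f : A → ℕ} {x y : A} (h : f x < f y) : SPref (mkOrd f) x y := by
  refine ⟨Or.inl h, ?_⟩
  rintro (h' | ⟨h', -⟩) <;> omega

/-- rank function: x first, y second, z third, everything else last. -/
noncomputable def rk3 (x y z t : A) : ℕ :=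
  if t = x then 0 else if t = y then 1 else if t = z then 2 else 3

lemma rk3_fst (x y z : A) : rk3 x y z x = 0 := by simp [rk3]

lemma rk3_snd {x y : A} (z : A) (h : y ≠ x) : rk3 x y z y = 1 := by simp [rk3, h]

lemma rk3_thd {x y z : A} (h1 : z ≠ x) (h2 : z ≠ y) : rk3 x y z z = 2 := by simp [rk3, h1, h2]

lemma rk3_pos {x t : A} (y z : A) (h : t ≠ x) : 0 < rk3 x y z t := by
  unfold rk3; rw [if_neg h]; split_ifs <;> omega

lemma rk3_ge2 {x y t : A} (z : A) (h1 : t ≠ x) (h2 : t ≠ y) : 2 ≤ rk3 x y z t := by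
  unfold rk3; rw [if_neg h1, if_neg h2]; split_ifs <;> omega

lemma rk3_rest {x y z t : A} (h1 : t ≠ x) (h2 : t ≠ y) (h3 : t ≠ z) : rk3 x y z t = 3 := by
  simp [rk3, h1, h2, h3]

lemma mk_top {x c : A} (y z : A) (h : c ≠ x) : SPref (mkOrd (rk3 x y z)) x c :=
  mkOrd_spref (by rw [rk3_fst]; exact rk3_pos y z h)

lemma mk_snd {x y c : A} (z : A) (hyx : y ≠ x) (h1 : c ≠ x) (h2 : c ≠ y) :
    SPref (mkOrd (rk3 x y z)) y c :=
  mkOrd_spref (by rw [rk3_snd z hyx]; exact lt_of_lt_of_le one_lt_two (rk3_ge2 z h1 h2))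

lemma spref_irrefl (W : StrictOrd A) (x : A) : ¬ SPref W x x := fun h => h.2 h.1

lemma spref_asymm {W : StrictOrd A} {x y : A} (h : SPref W x y) : ¬ SPref W y x :=
  fun h' => h.2 h'.1

lemma spref_total (W : StrictOrd A) {x y : A} (h : x ≠ y) : SPref W x y ∨ SPref W y x := by
  rcases W.2.1 x y with h1 | h1
  · by_cases h2 : W.1 y x
    · exact absurd (W.2.2.2 h1 h2) h
    · exact Or.inl ⟨h1, h2⟩
  · by_cases h2 : W.1 x y
    · exact absurd (W.2.2.2 h2 h1) h
    · exact Or.inr ⟨h1, h2⟩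

/-- every strict order has a maximum on a finite nonempty set -/
lemma exists_top (W : StrictOrd A) {S : Set A} (hfin : S.Finite) (hne : S.Nonempty) :
    ∃ m ∈ S, ∀ y ∈ S, y ≠ m → SPref W m y := by
  have key : ∀ s : Finset A, s.Nonempty → ∃ m ∈ s, ∀ y ∈ s, W.1 m y := by
    intro s
    induction s using Finset.induction_on with
    | empty => intro h; exact absurd h (by simp)
    | @insert a s ha ih =>
      intro _
      rcases s.eq_empty_or_nonempty with rfl | hs
      · exact ⟨a, by simp, by
          intro y hy
          simp only [Finset.mem_insert, Finset.notMem_empty, or_false] at hy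
          subst hy
          exact (W.2.1 _ _).elim id id⟩
      · obtain ⟨m, hm, hmax⟩ := ih hs
        rcases W.2.1 a m with h | h
        · refine ⟨a, Finset.mem_insert_self a s, ?_⟩
          intro y hy
          rcases Finset.mem_insert.1 hy with rfl | hy
          · exact (W.2.1 _ _).elim id id
          · exact W.2.2.1 h (hmax y hy)
        · refine ⟨m, Finset.mem_insert_of_mem hm, ?_⟩
          intro y hy
          rcases Finset.mem_insert.1 hy with rfl | hy
          · exact h
          · exact hmax y hy
  obtain ⟨m, hm, hmax⟩ := key hfin.toFinset (by rwa [Set.Finite.toFinset_nonempty])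
  refine ⟨m, hfin.mem_toFinset.1 hm, ?_⟩
  intro y hy hne'
  have hWmy := hmax y (hfin.mem_toFinset.2 hy)
  exact ⟨hWmy, fun hyx => hne' (W.2.2.2 hyx hWmy)⟩

end Infra

section Main

variable {Astar : Set A} {φ : SProfile V A → A}

/-- The single consequence of CSP used everywhere: if outcomes differ, some mover fails
to strictly gain. -/
lemma no_manip (hCSP : CSP φ) {P Q : SProfile V A} (h : φ Q ≠ φ P) :
    ∃ v, Q v ≠ P v ∧ ¬ SPref (P v) (φ Q) (φ P) := by
  by_contra hc
  push_neg at hc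
  have hne : ({v | Q v ≠ P v} : Set V).Nonempty := by
    by_contra h2
    rw [Set.not_nonempty_iff_eq_empty] at h2
    have hPQ : Q = P := by
      funext v
      by_contra h3
      have : v ∈ ({v | Q v ≠ P v} : Set V) := h3
      rw [h2] at this
      exact this
    exact h (by rw [hPQ])
  exact hCSP {v | Q v ≠ P v} P ⟨hne, Q, fun v hv => not_not.1 hv, fun v hv => hc v hv⟩

lemma phi_mem (hrange : Set.range φ = Astar) (P : SProfile V A) : φ P ∈ Astar :=
  hrange ▸ Set.mem_range_self P

lemma pareto (hCSP : CSP φ) (hrange : Set.range φ = Astar) {P : SProfile V A} {x c : A}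
    (hx : x ∈ Astar) (hxc : x ≠ c) (h : ∀ v, SPref (P v) x c) : φ P ≠ c := by
  intro hc
  obtain ⟨R, hR⟩ : ∃ R, φ R = x := by rw [← hrange] at hx; exact hx
  obtain ⟨v, -, hv⟩ := no_manip hCSP (P := P) (Q := R) (by rw [hR, hc]; exact hxc)
  exact hv (by rw [hR, hc]; exact h v)

def TopTwoAt (Astar : Set A) (x y : A) (W : StrictOrd A) : Prop :=
  ∀ c ∈ Astar, c ≠ x → c ≠ y → SPref W x c ∧ SPref W y c

lemma tt_comm {x y : A} {W : StrictOrd A} (h : TopTwoAt Astar x y W) : TopTwoAt Astar y x W :=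
  fun c hc h1 h2 => (h c hc h2 h1).symm

lemma tt_mk {x y : A} (z : A) (hyx : y ≠ x) : TopTwoAt Astar x y (mkOrd (rk3 x y z)) :=
  fun _ _ h1 h2 => ⟨mk_top y z h1, mk_snd z hyx h1 h2⟩

/-- winner of a profile where `{x,y}` is everyone's top pair lies in `{x,y}`. -/
lemma tt_winner (hCSP : CSP φ) (hrange : Set.range φ = Astar) {x y : A}
    (hx : x ∈ Astar) {P : SProfile V A} (hP : ∀ v, TopTwoAt Astar x y (P v)) :
    φ P = x ∨ φ P = y := by
  by_contra h
  push_neg at h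
  exact pareto hCSP hrange hx (Ne.symm h.1)
    (fun v => (hP v (φ P) (phi_mem hrange P) h.1 h.2).1) rfl

/-- Two profiles in which `{x,y}` is everyone's top pair and that agree pointwise
on the `x` vs `y` comparison elect the same alternative. -/
lemma two_cand (hCSP : CSP φ) (hrange : Set.range φ = Astar) {x y : A}
    (hx : x ∈ Astar) (hy : y ∈ Astar) (hxy : x ≠ y) {P P' : SProfile V A}
    (hP : ∀ v, TopTwoAt Astar x y (P v)) (hP' : ∀ v, TopTwoAt Astar x y (P' v))
    (hsame : ∀ v, SPref (P v) x y ↔ SPref (P' v) x y) : φ P = φ P' := by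
  have sub : ∀ P1 P2 : SProfile V A, (∀ v, TopTwoAt Astar x y (P1 v)) →
      (∀ v, TopTwoAt Astar x y (P2 v)) → (∀ v, SPref (P1 v) x y ↔ SPref (P2 v) x y) →
      φ P1 = x → φ P2 = y → False := by
    intro P1 P2 h1 h2 hs hx1 hy2
    set R : SProfile V A := fun v => if SPref (P1 v) x y then P2 v else P1 v with hRdef
    have hRtt : ∀ v, TopTwoAt Astar x y (R v) := by
      intro v
      by_cases h : SPref (P1 v) x y
      · simpa [hRdef, h] using h2 v
      · simpa [hRdef, h] using h1 v
    rcases tt_winner hCSP hrange hx hRtt with hR | hR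
    · obtain ⟨v, hv, hv2⟩ := no_manip hCSP (P := R) (Q := P2) (by rw [hy2, hR]; exact hxy.symm)
      have hns : ¬ SPref (P1 v) x y := by
        intro hq
        exact hv (by simp [hRdef, hq])
      have hyx : SPref (R v) y x := by
        have := (spref_total (P1 v) hxy).resolve_left hns
        simpa [hRdef, hns] using this
      exact hv2 (by rw [hy2, hR]; exact hyx)
    · obtain ⟨v, hv, hv2⟩ := no_manip hCSP (P := R) (Q := P1) (by rw [hx1, hR]; exact hxy)
      have hq : SPref (P1 v) x y := by
        by_contra hq
        exact hv (by simp [hRdef, hq])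
      apply hv2
      rw [hx1, hR]
      have : R v = P2 v := by simp [hRdef, hq]
      rw [this]
      exact (hs v).1 hq
  rcases tt_winner hCSP hrange hx hP with h1 | h1 <;>
    rcases tt_winner hCSP hrange hx hP' with h2 | h2
  · rw [h1, h2]
  · exact absurd (sub P P' hP hP' hsame h1 h2) not_false
  · exact absurd (sub P' P hP' hP (fun v => (hsame v).symm) h2 h1) not_false
  · rw [h1, h2]

end Main

section Main2

variable {Astar : Set A} {φ : SProfile V A → A}

/-- two-block profile -/
noncomputable def pr (E : Set V) (W1 W2 : StrictOrd A) : SProfile V A :=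
  fun v => if v ∈ E then W1 else W2

lemma pr_pos {E : Set V} {W1 W2 : StrictOrd A} {v : V} (hv : v ∈ E) : pr E W1 W2 v = W1 :=
  if_pos hv

lemma pr_neg {E : Set V} {W1 W2 : StrictOrd A} {v : V} (hv : v ∉ E) : pr E W1 W2 v = W2 :=
  if_neg hv

/-- the canonical two-tier profile: `E`-voters rank `x ≻ y ≻ rest`, the others
`y ≻ x ≻ rest`. -/
noncomputable def prof2 (E : Set V) (x y : A) : SProfile V A :=
  pr E (mkOrd (rk3 x y y)) (mkOrd (rk3 y x x))

/-- `E` is decisive for `x` against `y`. -/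
def Dec (φ : SProfile V A → A) (E : Set V) (x y : A) : Prop := φ (prof2 E x y) = x

lemma prof2_tt {E : Set V} {x y : A} (hxy : x ≠ y) (v : V) :
    TopTwoAt Astar x y (prof2 E x y v) := by
  by_cases hv : v ∈ E
  · rw [prof2, pr_pos hv]; exact tt_mk y (Ne.symm hxy)
  · rw [prof2, pr_neg hv]; exact tt_comm (tt_mk x hxy)

lemma prof2_spref_iff {E : Set V} {x y : A} (hxy : x ≠ y) (v : V) :
    SPref (prof2 E x y v) x y ↔ v ∈ E := by
  by_cases hv : v ∈ E
  · rw [prof2, pr_pos hv]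
    exact iff_of_true (mkOrd_spref (by rw [rk3_fst, rk3_snd y (Ne.symm hxy)]; omega)) hv
  · rw [prof2, pr_neg hv]
    refine iff_of_false ?_ hv
    exact spref_asymm (mkOrd_spref (by rw [rk3_fst, rk3_snd x hxy]; omega))

/-- any everyone-tops-`{x,y}` profile whose `x ≻ y` set is `E` elects the same
alternative as the canonical two-tier profile. -/
lemma dec_eq (hCSP : CSP φ) (hrange : Set.range φ = Astar) {E : Set V} {x y : A}
    (hx : x ∈ Astar) (hy : y ∈ Astar) (hxy : x ≠ y) {P : SProfile V A}
    (htt : ∀ v, TopTwoAt Astar x y (P v)) (hiff : ∀ v, SPref (P v) x y ↔ v ∈ E) :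
    φ P = φ (prof2 E x y) :=
  two_cand hCSP hrange hx hy hxy htt (prof2_tt hxy)
    (fun v => (hiff v).trans (prof2_spref_iff hxy v).symm)

lemma val_mem (hCSP : CSP φ) (hrange : Set.range φ = Astar) {E : Set V} {x y : A}
    (hx : x ∈ Astar) (hxy : x ≠ y) :
    φ (prof2 E x y) = x ∨ φ (prof2 E x y) = y := by
  by_contra h
  push_neg at h
  refine pareto hCSP hrange hx (Ne.symm h.1) (fun v => ?_) rfl
  by_cases hv : v ∈ E
  · rw [prof2, pr_pos hv]; exact mk_top y y h.1
  · rw [prof2, pr_neg hv]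
    exact mk_snd x hxy h.2 h.1

lemma dec_univ (hCSP : CSP φ) (hrange : Set.range φ = Astar) {x y : A}
    (hx : x ∈ Astar) (hxy : x ≠ y) : Dec φ (Set.univ : Set V) x y := by
  rcases val_mem hCSP hrange (E := (Set.univ : Set V)) hx hxy with h | h
  · exact h
  · exfalso
    refine pareto hCSP hrange hx hxy (fun v => ?_) h
    rw [prof2, pr_pos (Set.mem_univ v)]
    exact mkOrd_spref (by rw [rk3_fst, rk3_snd y (Ne.symm hxy)]; omega)

lemma dec_superset (hCSP : CSP φ) (hrange : Set.range φ = Astar) {E E' : Set V} {x y : A}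
    (hsub : E ⊆ E') (h : Dec φ E x y) : Dec φ E' x y := by
  by_contra hne
  obtain ⟨v, hv, hv2⟩ := no_manip hCSP (P := prof2 E' x y) (Q := prof2 E x y)
    (by rw [h]; exact fun hh => hne hh.symm)
  have hvE' : v ∈ E' := by
    by_cases h1 : v ∈ E
    · exact hsub h1
    · by_cases h2 : v ∈ E'
      · exact h2
      · exact absurd (by rw [prof2, prof2, pr_neg h1, pr_neg h2]) hv
  apply hv2
  rw [h, prof2, pr_pos hvE']
  exact mk_top y y (fun hh => hne hh)

end Main2

section Main3

variable {Astar : Set A} {φ : SProfile V A → A}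

lemma dec_P' (hCSP : CSP φ) (hrange : Set.range φ = Astar) {E : Set V} {x y : A} (z : A)
    (hx : x ∈ Astar) (hy : y ∈ Astar) (hxy : x ≠ y) (h : Dec φ E x y) :
    φ (pr E (mkOrd (rk3 x y z)) (mkOrd (rk3 y x z))) = x := by
  have hd : φ (pr E (mkOrd (rk3 x y z)) (mkOrd (rk3 y x z))) = φ (prof2 E x y) := by
    refine dec_eq hCSP hrange hx hy hxy (fun v => ?_) (fun v => ?_)
    · by_cases hv : v ∈ E
      · rw [pr_pos hv]; exact tt_mk z (Ne.symm hxy)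
      · rw [pr_neg hv]; exact tt_comm (tt_mk z hxy)
    · by_cases hv : v ∈ E
      · rw [pr_pos hv]
        exact iff_of_true (mkOrd_spref (by rw [rk3_fst, rk3_snd z (Ne.symm hxy)]; omega)) hv
      · rw [pr_neg hv]
        exact iff_of_false
          (spref_asymm (mkOrd_spref (by rw [rk3_fst, rk3_snd z hxy]; omega))) hv
  rw [hd, h]

lemma dec_I (hCSP : CSP φ) (hrange : Set.range φ = Astar) {E : Set V} {x y z : A}
    (hx : x ∈ Astar) (hy : y ∈ Astar) (hz : z ∈ Astar)
    (hxy : x ≠ y) (hxz : x ≠ z) (hyz : y ≠ z) (h : Dec φ E x y) : Dec φ E x z := by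
  have hP'x := dec_P' hCSP hrange z hx hy hxy h
  -- three-tier profile : E : x>y>z, others : y>z>x
  set P : SProfile V A := pr E (mkOrd (rk3 x y z)) (mkOrd (rk3 y z x)) with hPdef
  have hPmem : φ P = x ∨ φ P = y := by
    by_contra hcon
    push_neg at hcon
    refine pareto hCSP hrange hy (Ne.symm hcon.2) (fun v => ?_) rfl
    by_cases hv : v ∈ E
    · rw [hPdef, pr_pos hv]; exact mk_snd z (Ne.symm hxy) hcon.1 hcon.2
    · rw [hPdef, pr_neg hv]; exact mk_top z x hcon.2
  have hPx : φ P = x := by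
    rcases hPmem with h' | h'
    · exact h'
    · exfalso
      obtain ⟨v, hv, hv2⟩ := no_manip hCSP
        (P := pr E (mkOrd (rk3 x y z)) (mkOrd (rk3 y x z))) (Q := P)
        (by rw [h', hP'x]; exact Ne.symm hxy)
      have hvE : v ∉ E := by
        intro hvE
        exact hv (by rw [hPdef, pr_pos hvE, pr_pos hvE])
      apply hv2
      rw [h', hP'x, pr_neg hvE]
      exact mkOrd_spref (by rw [rk3_fst, rk3_snd z hxy]; omega)
  -- E switches to x>z>y
  set R : SProfile V A := pr E (mkOrd (rk3 x z y)) (mkOrd (rk3 y z x)) with hRdef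
  have hRx : φ R = x := by
    by_contra hne
    obtain ⟨v, hv, hv2⟩ := no_manip hCSP (P := R) (Q := P)
      (by rw [hPx]; exact fun hh => hne hh.symm)
    have hvE : v ∈ E := by
      by_contra hvE
      exact hv (by rw [hPdef, hRdef, pr_neg hvE, pr_neg hvE])
    apply hv2
    rw [hPx, hRdef, pr_pos hvE]
    exact mk_top z y hne
  -- others switch to z>x>y
  set S : SProfile V A := pr E (mkOrd (rk3 x z y)) (mkOrd (rk3 z x y)) with hSdef
  have hSmem : φ S = x ∨ φ S = z := by
    by_contra hcon
    push_neg at hcon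
    refine pareto hCSP hrange hx (Ne.symm hcon.1) (fun v => ?_) rfl
    by_cases hv : v ∈ E
    · rw [hSdef, pr_pos hv]; exact mk_top z y hcon.1
    · rw [hSdef, pr_neg hv]; exact mk_snd y hxz hcon.2 hcon.1
  have hSx : φ S = x := by
    rcases hSmem with h' | h'
    · exact h'
    · exfalso
      obtain ⟨v, hv, hv2⟩ := no_manip hCSP (P := R) (Q := S)
        (by rw [h', hRx]; exact Ne.symm hxz)
      have hvE : v ∉ E := by
        intro hvE
        exact hv (by rw [hSdef, hRdef, pr_pos hvE, pr_pos hvE])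
      apply hv2
      rw [h', hRx, hRdef, pr_neg hvE]
      exact mkOrd_spref
        (by rw [rk3_snd x (Ne.symm hyz), rk3_thd hxy hxz]; omega)
  have hfin : φ S = φ (prof2 E x z) := by
    refine dec_eq hCSP hrange hx hz hxz (fun v => ?_) (fun v => ?_)
    · by_cases hv : v ∈ E
      · rw [hSdef, pr_pos hv]; exact tt_mk y (Ne.symm hxz)
      · rw [hSdef, pr_neg hv]; exact tt_comm (tt_mk y hxz)
    · by_cases hv : v ∈ E
      · rw [hSdef, pr_pos hv]
        exact iff_of_true (mkOrd_spref (by rw [rk3_fst, rk3_snd y (Ne.symm hxz)]; omega)) hv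
      · rw [hSdef, pr_neg hv]
        exact iff_of_false
          (spref_asymm (mkOrd_spref (by rw [rk3_fst, rk3_snd y hxz]; omega))) hv
  exact hfin.symm.trans hSx

lemma dec_II (hCSP : CSP φ) (hrange : Set.range φ = Astar) {E : Set V} {x y z : A}
    (hx : x ∈ Astar) (hy : y ∈ Astar) (hz : z ∈ Astar)
    (hxy : x ≠ y) (hxz : x ≠ z) (hyz : y ≠ z) (h : Dec φ E x y) : Dec φ E z y := by
  have hP'x := dec_P' hCSP hrange z hx hy hxy h
  -- E switches to z>x>y
  set R : SProfile V A := pr E (mkOrd (rk3 z x y)) (mkOrd (rk3 y x z)) with hRdef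
  have hRmem : φ R = x ∨ φ R = y ∨ φ R = z := by
    by_contra hcon
    push_neg at hcon
    obtain ⟨h1, h2, h3⟩ := hcon
    refine pareto hCSP hrange hx (Ne.symm h1) (fun v => ?_) rfl
    by_cases hv : v ∈ E
    · rw [hRdef, pr_pos hv]; exact mk_snd y hxz h3 h1
    · rw [hRdef, pr_neg hv]; exact mk_snd z hxy h2 h1
  have hRnoty : φ R ≠ y := by
    intro hRy
    obtain ⟨v, hv, hv2⟩ := no_manip hCSP
      (P := R) (Q := pr E (mkOrd (rk3 x y z)) (mkOrd (rk3 y x z)))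
      (by rw [hP'x, hRy]; exact hxy)
    have hvE : v ∈ E := by
      by_contra hvE
      exact hv (by rw [hRdef, pr_neg hvE, pr_neg hvE])
    apply hv2
    rw [hP'x, hRy, hRdef, pr_pos hvE]
    exact mkOrd_spref (by rw [rk3_snd y hxz, rk3_thd hyz (Ne.symm hxy)]; omega)
  -- others switch to y>z>x
  set S : SProfile V A := pr E (mkOrd (rk3 z x y)) (mkOrd (rk3 y z x)) with hSdef
  have hSmem : φ S = y ∨ φ S = z := by
    by_contra hcon
    push_neg at hcon
    refine pareto hCSP hrange hz (Ne.symm hcon.2) (fun v => ?_) rfl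
    by_cases hv : v ∈ E
    · rw [hSdef, pr_pos hv]; exact mk_top x y hcon.2
    · rw [hSdef, pr_neg hv]; exact mk_snd x (Ne.symm hyz) hcon.1 hcon.2
  have hSz : φ S = z := by
    rcases hSmem with h' | h'
    · exfalso
      rcases hRmem with hr | hr | hr
      · obtain ⟨v, hv, hv2⟩ := no_manip hCSP (P := R) (Q := S)
          (by rw [h', hr]; exact Ne.symm hxy)
        have hvE : v ∉ E := by
          intro hvE
          exact hv (by rw [hSdef, hRdef, pr_pos hvE, pr_pos hvE])
        apply hv2
        rw [h', hr, hRdef, pr_neg hvE]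
        exact mkOrd_spref (by rw [rk3_fst, rk3_snd z hxy]; omega)
      · exact hRnoty hr
      · obtain ⟨v, hv, hv2⟩ := no_manip hCSP (P := R) (Q := S)
          (by rw [h', hr]; exact hyz)
        have hvE : v ∉ E := by
          intro hvE
          exact hv (by rw [hSdef, hRdef, pr_pos hvE, pr_pos hvE])
        apply hv2
        rw [h', hr, hRdef, pr_neg hvE]
        exact mkOrd_spref (by rw [rk3_fst, rk3_thd hyz.symm hxz.symm]; omega)
    · exact h'
  -- E switches to z>y>x
  set T : SProfile V A := pr E (mkOrd (rk3 z y x)) (mkOrd (rk3 y z x)) with hTdef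
  have hTz : φ T = z := by
    by_contra hne
    obtain ⟨v, hv, hv2⟩ := no_manip hCSP (P := T) (Q := S)
      (by rw [hSz]; exact fun hh => hne hh.symm)
    have hvE : v ∈ E := by
      by_contra hvE
      exact hv (by rw [hSdef, hTdef, pr_neg hvE, pr_neg hvE])
    apply hv2
    rw [hSz, hTdef, pr_pos hvE]
    exact mk_top y x hne
  have hfin : φ T = φ (prof2 E z y) := by
    refine dec_eq hCSP hrange hz hy (Ne.symm hyz) (fun v => ?_) (fun v => ?_)
    · by_cases hv : v ∈ E
      · rw [hTdef, pr_pos hv]; exact tt_mk x hyz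
      · rw [hTdef, pr_neg hv]; exact tt_comm (tt_mk x (Ne.symm hyz))
    · by_cases hv : v ∈ E
      · rw [hTdef, pr_pos hv]
        exact iff_of_true (mkOrd_spref (by rw [rk3_fst, rk3_snd x hyz]; omega)) hv
      · rw [hTdef, pr_neg hv]
        exact iff_of_false
          (spref_asymm (mkOrd_spref (by rw [rk3_fst, rk3_snd x (Ne.symm hyz)]; omega))) hv
  exact hfin.symm.trans hTz

end Main3

section Main4

variable {Astar : Set A} {φ : SProfile V A → A}

lemma dec_reach (hCSP : CSP φ) (hrange : Set.range φ = Astar)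
    (hthird : ∀ x y : A, ∃ z ∈ Astar, z ≠ x ∧ z ≠ y) {E : Set V} {x y u w : A}
    (hx : x ∈ Astar) (hy : y ∈ Astar) (hxy : x ≠ y)
    (hu : u ∈ Astar) (hw : w ∈ Astar) (huw : u ≠ w) (h : Dec φ E x y) : Dec φ E u w := by
  by_cases hux : u = x
  · subst hux
    by_cases hwy : w = y
    · subst hwy; exact h
    · exact dec_I hCSP hrange hx hy hw hxy huw (fun hh => hwy hh.symm) h
  · by_cases huy : u = y
    · subst huy
      obtain ⟨z, hzA, hzx, hzy⟩ := hthird x u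
      have h1 : Dec φ E x z := dec_I hCSP hrange hx hu hzA hxy (Ne.symm hzx) (Ne.symm hzy) h
      have h2 : Dec φ E u z := dec_II hCSP hrange hx hzA hu (Ne.symm hzx) hxy hzy h1
      by_cases hwz : w = z
      · subst hwz; exact h2
      · exact dec_I hCSP hrange hu hzA hw (Ne.symm hzy) huw (fun hh => hwz hh.symm) h2
    · have h1 : Dec φ E u y := dec_II hCSP hrange hx hy hu hxy
        (fun hh => hux hh.symm) (fun hh => huy hh.symm) h
      by_cases hwy : w = y
      · subst hwy; exact h1
      · exact dec_I hCSP hrange hu hy hw huy huw (fun hh => hwy hh.symm) h1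

lemma prof2_compl (E : Set V) (x y : A) : prof2 E x y = prof2 Eᶜ y x := by
  funext v
  by_cases hv : v ∈ E
  · rw [prof2, prof2, pr_pos hv, pr_neg (by simpa using hv)]
  · rw [prof2, prof2, pr_neg hv, pr_pos (by simpa using hv)]

lemma dec_not_iff (hCSP : CSP φ) (hrange : Set.range φ = Astar)
    (hthird : ∀ x y : A, ∃ z ∈ Astar, z ≠ x ∧ z ≠ y) {E : Set V} {x y : A}
    (hx : x ∈ Astar) (hy : y ∈ Astar) (hxy : x ≠ y) :
    Dec φ Eᶜ x y ↔ ¬ Dec φ E x y := by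
  constructor
  · intro h hDec
    have h2 : Dec φ Eᶜ y x :=
      dec_reach hCSP hrange hthird hx hy hxy hy hx (Ne.symm hxy) h
    have h3 : φ (prof2 E x y) = y := by rw [prof2_compl]; exact h2
    exact hxy (hDec.symm.trans h3)
  · intro h
    have h2 : φ (prof2 E x y) = y := (val_mem hCSP hrange hx hxy).resolve_left h
    have h3 : Dec φ Eᶜ y x := by
      show φ (prof2 Eᶜ y x) = y
      rw [← prof2_compl]; exact h2
    exact dec_reach hCSP hrange hthird hy hx (Ne.symm hxy) hx hy hxy h3

/-- a decisive coalition never unanimously strictly prefers some alternative to the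
elected one -/
lemma dec_no_better (hCSP : CSP φ) (hrange : Set.range φ = Astar) {E : Set V} {c : A}
    {P : SProfile V A} (hc : c ∈ Astar) (hcw : c ≠ φ P)
    (hDec : Dec φ E c (φ P)) (hpref : ∀ v ∈ E, SPref (P v) c (φ P)) : False := by
  set Q1 : SProfile V A := fun v => if v ∈ E then P v else mkOrd (rk3 (φ P) c c) with hQ1def
  have hQ1 : φ Q1 = φ P := by
    by_contra hne
    obtain ⟨v, hv, hv2⟩ := no_manip hCSP (P := Q1) (Q := P)
      (fun hh => hne hh.symm)
    have hvE : v ∉ E := by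
      intro hvE
      exact hv (by rw [hQ1def]; simp only [if_pos hvE])
    apply hv2
    have : Q1 v = mkOrd (rk3 (φ P) c c) := by rw [hQ1def]; simp only [if_neg hvE]
    rw [this]
    exact mk_top c c hne
  obtain ⟨v, hv, hv2⟩ := no_manip hCSP (P := Q1) (Q := prof2 E c (φ P))
    (by rw [hDec, hQ1]; exact hcw)
  have hvE : v ∈ E := by
    by_contra hvE
    refine hv ?_
    rw [hQ1def, prof2]
    simp only [if_neg hvE, pr_neg hvE]
  apply hv2
  rw [hDec, hQ1]
  have : Q1 v = P v := by rw [hQ1def]; simp only [if_pos hvE]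
  rw [this]
  exact hpref v hvE

end Main4

section Main5

variable {Astar : Set A} {φ : SProfile V A → A}

lemma dec_inter (hCSP : CSP φ) (hrange : Set.range φ = Astar)
    (hthird : ∀ x y : A, ∃ z ∈ Astar, z ≠ x ∧ z ≠ y) {a b c : A}
    (ha : a ∈ Astar) (hb : b ∈ Astar) (hc : c ∈ Astar)
    (hab : a ≠ b) (hac : a ≠ c) (hbc : b ≠ c) {E1 E2 : Set V}
    (h1 : Dec φ E1 a b) (h2 : Dec φ E2 a b) : Dec φ (E1 ∩ E2) a b := by
  by_contra hcon
  have h3 : Dec φ (E1 ∩ E2)ᶜ a b := (dec_not_iff hCSP hrange hthird ha hb hab).mpr hcon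
  set P : SProfile V A := fun v =>
    if v ∈ E1 ∩ E2 then mkOrd (rk3 a b c)
    else if v ∈ E1 then mkOrd (rk3 c a b) else mkOrd (rk3 b c a) with hPdef
  have hPmem : φ P = a ∨ φ P = b ∨ φ P = c := by
    by_contra hcon2
    push_neg at hcon2
    obtain ⟨hna, hnb, hnc⟩ := hcon2
    refine pareto hCSP hrange ha (Ne.symm hna) (fun v => ?_) rfl
    by_cases hv1 : v ∈ E1 ∩ E2
    · have : P v = mkOrd (rk3 a b c) := by rw [hPdef]; simp only [if_pos hv1]
      rw [this]; exact mk_top b c hna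
    · by_cases hv2 : v ∈ E1
      · have : P v = mkOrd (rk3 c a b) := by
          rw [hPdef]; simp only [if_neg hv1, if_pos hv2]
        rw [this]; exact mk_snd b hac hnc hna
      · have : P v = mkOrd (rk3 b c a) := by
          rw [hPdef]; simp only [if_neg hv1, if_neg hv2]
        rw [this]
        exact mkOrd_spref (by rw [rk3_thd hab hac, rk3_rest hnb hnc hna]; omega)
  rcases hPmem with hw | hw | hw
  · have hd : Dec φ (E1 ∩ E2)ᶜ c a :=
      dec_reach hCSP hrange hthird ha hb hab hc ha (Ne.symm hac) h3
    refine dec_no_better hCSP hrange hc (by rw [hw]; exact Ne.symm hac)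
      (by rw [hw]; exact hd) (fun v hv => ?_)
    rw [hw]
    have hv1 : v ∉ E1 ∩ E2 := hv
    by_cases hv2 : v ∈ E1
    · have : P v = mkOrd (rk3 c a b) := by
        rw [hPdef]; simp only [if_neg hv1, if_pos hv2]
      rw [this]
      exact mkOrd_spref (by rw [rk3_fst, rk3_snd b hac]; omega)
    · have : P v = mkOrd (rk3 b c a) := by
        rw [hPdef]; simp only [if_neg hv1, if_neg hv2]
      rw [this]
      exact mkOrd_spref (by rw [rk3_snd a (Ne.symm hbc), rk3_thd hab hac]; omega)
  · refine dec_no_better hCSP hrange ha (by rw [hw]; exact hab)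
      (by rw [hw]; exact h1) (fun v hv => ?_)
    rw [hw]
    by_cases hv1 : v ∈ E1 ∩ E2
    · have : P v = mkOrd (rk3 a b c) := by rw [hPdef]; simp only [if_pos hv1]
      rw [this]
      exact mkOrd_spref (by rw [rk3_fst, rk3_snd c (Ne.symm hab)]; omega)
    · have : P v = mkOrd (rk3 c a b) := by
        rw [hPdef]; simp only [if_neg hv1, if_pos hv]
      rw [this]
      exact mkOrd_spref (by rw [rk3_snd b hac, rk3_thd hbc (Ne.symm hab)]; omega)
  · have hsub : E2 ⊆ E1ᶜ ∪ (E1 ∩ E2) := by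
      intro v hv
      by_cases h' : v ∈ E1
      · exact Or.inr ⟨h', hv⟩
      · exact Or.inl h'
    have hd0 : Dec φ (E1ᶜ ∪ (E1 ∩ E2)) a b := dec_superset hCSP hrange hsub h2
    have hd : Dec φ (E1ᶜ ∪ (E1 ∩ E2)) b c :=
      dec_reach hCSP hrange hthird ha hb hab hb hc hbc hd0
    refine dec_no_better hCSP hrange hb (by rw [hw]; exact hbc)
      (by rw [hw]; exact hd) (fun v hv => ?_)
    rw [hw]
    rcases hv with hv | hv
    · have hv1 : v ∉ E1 ∩ E2 := fun hh => hv hh.1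
      have : P v = mkOrd (rk3 b c a) := by
        rw [hPdef]; simp only [if_neg hv1, if_neg hv]
      rw [this]
      exact mkOrd_spref (by rw [rk3_fst, rk3_snd a (Ne.symm hbc)]; omega)
    · have : P v = mkOrd (rk3 a b c) := by rw [hPdef]; simp only [if_pos hv]
      rw [this]
      exact mkOrd_spref
        (by rw [rk3_snd c (Ne.symm hab), rk3_thd (Ne.symm hac) (Ne.symm hbc)]; omega)

end Main5

theorem finite_range_strict_representation_aux
    (Astar : Set A) (hfin : Astar.Finite) (hcard : 3 ≤ Astar.ncard)
    (φ : SProfile V A → A) (hrange : Set.range φ = Astar) :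
    CSP φ ↔
      ∃ F : Ultrafilter V, ∀ P : SProfile V A,
        (φ P ∈ Astar ∧ DTop Astar (φ P) P ∈ F) ∧
        ∀ c ∈ Astar, DTop Astar c P ∈ F → c = φ P := by
  constructor
  · intro hCSP
    obtain ⟨a0, b0, c0, ha0, hb0, hc0, hab, hac, hbc⟩ :
        ∃ a b c : A, a ∈ Astar ∧ b ∈ Astar ∧ c ∈ Astar ∧ a ≠ b ∧ a ≠ c ∧ b ≠ c := by
      have hcard' : 3 ≤ hfin.toFinset.card := by
        rwa [Set.ncard_eq_toFinset_card _ hfin] at hcard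
      obtain ⟨t, hts, htc⟩ := Finset.exists_subset_card_eq hcard'
      obtain ⟨x, y, z, hxy, hxz, hyz, rfl⟩ := Finset.card_eq_three.1 htc
      exact ⟨x, y, z, hfin.mem_toFinset.1 (hts (by simp)),
        hfin.mem_toFinset.1 (hts (by simp)),
        hfin.mem_toFinset.1 (hts (by simp)), hxy, hxz, hyz⟩
    have hthird : ∀ x y : A, ∃ z ∈ Astar, z ≠ x ∧ z ≠ y := by
      intro x y
      by_contra hcon
      push_neg at hcon
      have hsub : Astar ⊆ {x, y} := by
        intro z hz
        by_cases h' : z = x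
        · exact Set.mem_insert_iff.mpr (Or.inl h')
        · exact Set.mem_insert_iff.mpr (Or.inr (hcon z hz h'))
      have h2 : Astar.ncard ≤ 2 := by
        calc Astar.ncard ≤ ({x, y} : Set A).ncard :=
              Set.ncard_le_ncard hsub ((Set.finite_singleton y).insert x)
          _ ≤ 2 := by
              refine (Set.ncard_insert_le x {y}).trans ?_
              simp [Set.ncard_singleton]
      omega
    let F0 : Filter V :=
      { sets := {E | Dec φ E a0 b0}
        univ_sets := dec_univ hCSP hrange ha0 hab
        sets_of_superset := fun hE hsub => dec_superset hCSP hrange hsub hE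
        inter_sets := fun hE hE' =>
          dec_inter hCSP hrange hthird ha0 hb0 hc0 hab hac hbc hE hE' }
    have hmem0 : ∀ s : Set V, s ∈ F0 ↔ Dec φ s a0 b0 := fun s => Iff.rfl
    have hcompl : ∀ s : Set V, sᶜ ∉ F0 ↔ s ∈ F0 := by
      intro s
      have hiff := dec_not_iff hCSP hrange hthird (E := s) ha0 hb0 hab
      rw [hmem0, hmem0]
      constructor
      · intro hns
        by_contra hs
        exact hns (hiff.mpr hs)
      · intro hs hcs
        exact (hiff.mp hcs) hs
    set F : Ultrafilter V := Ultrafilter.ofComplNotMemIff F0 hcompl with hFdef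
    have hmemF : ∀ E : Set V, E ∈ F ↔ Dec φ E a0 b0 := fun E => Iff.rfl
    refine ⟨F, fun P => ?_⟩
    have hPA : φ P ∈ Astar := phi_mem hrange P
    have huniq : ∀ c ∈ Astar, DTop Astar c P ∈ F → c = φ P := by
      intro c hc hmem
      by_contra hne
      have hd : Dec φ (DTop Astar c P) a0 b0 := (hmemF _).1 hmem
      have hd2 : Dec φ (DTop Astar c P) c (φ P) :=
        dec_reach hCSP hrange hthird ha0 hb0 hab hc hPA hne hd
      exact dec_no_better hCSP hrange hc hne hd2
        (fun v hv => hv (φ P) hPA (Ne.symm hne))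
    refine ⟨⟨hPA, ?_⟩, huniq⟩
    have hcover : (⋃ c ∈ Astar, DTop Astar c P) = Set.univ := by
      rw [Set.eq_univ_iff_forall]
      intro v
      obtain ⟨m, hm, htop⟩ := exists_top (P v) hfin ⟨a0, ha0⟩
      exact Set.mem_biUnion hm htop
    have hmemU : (⋃ c ∈ Astar, DTop Astar c P) ∈ F := by
      rw [hcover]
      exact Filter.univ_mem
    obtain ⟨c, hc, hcF⟩ := (Ultrafilter.finite_biUnion_mem_iff hfin).1 hmemU
    rwa [huniq c hc hcF] at hcF
  · rintro ⟨F, hF⟩ D P hMan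
    obtain ⟨hne, Q, hQoff, hgain⟩ := hMan
    obtain ⟨v0, hv0⟩ := hne
    have hba : φ Q ≠ φ P := by
      intro h
      exact spref_irrefl (P v0) (φ P) (h ▸ hgain v0 hv0)
    obtain ⟨⟨haP, hDP⟩, -⟩ := hF P
    obtain ⟨⟨haQ, hDQ⟩, -⟩ := hF Q
    have hint : (DTop Astar (φ P) P ∩ DTop Astar (φ Q) Q).Nonempty :=
      Ultrafilter.nonempty_of_mem (Filter.inter_mem hDP hDQ)
    obtain ⟨v, hvP, hvQ⟩ := hint
    by_cases hv : v ∈ D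
    · exact spref_asymm (hvP (φ Q) haQ hba) (hgain v hv)
    · have hQP : Q v = P v := hQoff v hv
      have h2 : SPref (P v) (φ Q) (φ P) := by
        have := hvQ (φ P) haP (Ne.symm hba)
        rwa [hQP] at this
      exact spref_asymm (hvP (φ Q) haQ hba) h2

/-- Theorem 1.1(ii): an scf on strict profiles whose range `A*` is finite of cardinality
at least three is coalitionally strategy-proof iff there is an ultrafilter `F` on `V`
such that `φ P` is the unique alternative `c ∈ A*` with `D(c,P) ∈ F`. -/
theorem finite_range_strict_representation
    (Astar : Set A) (hfin : Astar.Finite) (hcard : 3 ≤ Astar.ncard)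
    (φ : SProfile V A → A) (hrange : Set.range φ = Astar) :
    CSP φ ↔
      ∃ F : Ultrafilter V, ∀ P : SProfile V A,
        (φ P ∈ Astar ∧ DTop Astar (φ P) P ∈ F) ∧
        ∀ c ∈ Astar, DTop Astar c P ∈ F → c = φ P := by
  exact finite_range_strict_representation_aux Astar hfin hcard φ hrange
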